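/- For a Hermitian positive semi-definite matrix A and Hermitian positive semi-definite B, equality Tr(AB) = ‖A‖·Tr(B) holds if and only if the support of B (the orthogonal complement of its kernel) is contained in the eigenspace of A belonging to its largest eigenvalue. -/

import Mathlib

open Matrix
open scoped ComplexOrder

private lemma aux_trace_re {m k : Type*} [Fintype m] [Fintype k] (M : Matrix m k ℂ) :
    (Matrix.trace (Mᴴ * M)).re = 0 ↔ M = 0 := by
  have h : Matrix.trace (Mᴴ * M) = ∑ j, ∑ i, (Complex.normSq (M i j) : ℂ) := by
    simp [Matrix.trace, Matrix.diag, Matrix.mul_apply, Matrix.conjTranspose_apply,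
      Complex.normSq_eq_conj_mul_self]
  have h2 : (Matrix.trace (Mᴴ * M)).re = ∑ j, ∑ i, Complex.normSq (M i j) := by
    rw [h]; rw [Complex.re_sum]; simp [Complex.re_sum]
  rw [h2]
  constructor
  · intro hz
    ext i j
    have hnn : ∀ j ∈ Finset.univ, 0 ≤ ∑ i, Complex.normSq (M i j) :=
      fun j _ => Finset.sum_nonneg fun i _ => Complex.normSq_nonneg _
    have := (Finset.sum_eq_zero_iff_of_nonneg hnn).mp hz j (Finset.mem_univ j)
    have := (Finset.sum_eq_zero_iff_of_nonneg
      (fun i _ => Complex.normSq_nonneg (M i j))).mp this i (Finset.mem_univ i)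
    simpa [Complex.normSq_eq_zero] using this
  · intro hz; simp [hz]

private lemma aux_C_psd {n : ℕ} (A : Matrix (Fin n) (Fin n) ℂ) (hA : A.PosSemidef) :
    Matrix.PosSemidef ((((⨆ i, hA.isHermitian.eigenvalues i : ℝ) : ℂ)) • 1 - A) := by
  set μ : ℝ := ⨆ i, hA.isHermitian.eigenvalues i with hμ
  set U : Matrix (Fin n) (Fin n) ℂ :=
    (hA.isHermitian.eigenvectorUnitary : Matrix (Fin n) (Fin n) ℂ) with hUdef
  set D : Matrix (Fin n) (Fin n) ℂ := Matrix.diagonal (RCLike.ofReal ∘ hA.isHermitian.eigenvalues)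
  have hd : Matrix.PosSemidef
      (Matrix.diagonal (fun i => ((μ - hA.isHermitian.eigenvalues i : ℝ) : ℂ))) := by
    rw [posSemidef_diagonal_iff]
    intro i
    have : hA.isHermitian.eigenvalues i ≤ μ :=
      le_ciSup (Set.Finite.bddAbove (Set.finite_range _)) i
    rw [Complex.zero_le_real]
    linarith
  have hdiag : Matrix.diagonal (fun i => ((μ - hA.isHermitian.eigenvalues i : ℝ) : ℂ)) =
      (μ : ℂ) • 1 - D := by
    ext i j
    by_cases h : i = j <;> simp [D, Matrix.diagonal, h, Complex.ofReal_sub, Matrix.one_apply]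
  have hU : U * star U = 1 :=
    (Matrix.mem_unitaryGroup_iff).mp hA.isHermitian.eigenvectorUnitary.2
  have key : (((μ : ℂ)) • 1 - A) =
      U * Matrix.diagonal (fun i => ((μ - hA.isHermitian.eigenvalues i : ℝ) : ℂ)) * star U := by
    conv_lhs => rw [hA.isHermitian.spectral_theorem, Unitary.conjStarAlgAut_apply]
    rw [hdiag, Matrix.mul_sub, Matrix.sub_mul, mul_smul_comm, smul_mul_assoc, Matrix.mul_one, hU]
  rw [key]
  exact hd.mul_mul_conjTranspose_same _

open scoped MatrixOrder in
private noncomputable def Matrix.PosSemidef.sqrt {n : ℕ} {M : Matrix (Fin n) (Fin n) ℂ}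
    (_ : M.PosSemidef) : Matrix (Fin n) (Fin n) ℂ := CFC.sqrt M

open scoped MatrixOrder in
private lemma Matrix.PosSemidef.posSemidef_sqrt {n : ℕ} {M : Matrix (Fin n) (Fin n) ℂ}
    (hM : M.PosSemidef) : hM.sqrt.PosSemidef :=
  (CFC.sqrt_nonneg M).posSemidef

open scoped MatrixOrder in
private lemma Matrix.PosSemidef.sqrt_mul_self {n : ℕ} {M : Matrix (Fin n) (Fin n) ℂ}
    (hM : M.PosSemidef) : hM.sqrt * hM.sqrt = M :=
  CFC.sqrt_mul_sqrt_self M hM.nonneg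

theorem stmt_3 {n : ℕ} (A B : Matrix (Fin n) (Fin n) ℂ)
    (hA : A.PosSemidef) (hB : B.PosSemidef) :
    (Matrix.trace (A * B)).re =
        (⨆ i, hA.isHermitian.eigenvalues i) * (Matrix.trace B).re ↔
      ∀ v : Fin n → ℂ, (∀ w : Fin n → ℂ, B.mulVec w = 0 → star w ⬝ᵥ v = 0) →
        A.mulVec v = (((⨆ i, hA.isHermitian.eigenvalues i : ℝ) : ℂ)) • v := by
  set μ : ℝ := ⨆ i, hA.isHermitian.eigenvalues i with hμ
  set C : Matrix (Fin n) (Fin n) ℂ := (μ : ℂ) • 1 - A with hCdef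
  have hCpsd : C.PosSemidef := aux_C_psd A hA
  -- step 1 : trace condition ↔ (trace (C * B)).re = 0
  have htr : Matrix.trace (C * B) = (μ : ℂ) * Matrix.trace B - Matrix.trace (A * B) := by
    rw [hCdef, Matrix.sub_mul, smul_mul_assoc, Matrix.one_mul, trace_sub, trace_smul,
      smul_eq_mul]
  have h1 : (Matrix.trace (A * B)).re = μ * (Matrix.trace B).re ↔
      (Matrix.trace (C * B)).re = 0 := by
    rw [htr]
    simp only [Complex.sub_re, Complex.mul_re, Complex.ofReal_re, Complex.ofReal_im,
      zero_mul, sub_zero]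
    constructor <;> intro h <;> linarith
  -- step 2 : (trace (C * B)).re = 0 ↔ C * B = 0
  set S := hCpsd.sqrt with hSdef
  set T := hB.sqrt with hTdef
  have hSh : Sᴴ = S := hCpsd.posSemidef_sqrt.1
  have hTh : Tᴴ = T := hB.posSemidef_sqrt.1
  have hM : (S * T)ᴴ * (S * T) = T * C * T := by
    rw [conjTranspose_mul, hSh, hTh]
    calc T * S * (S * T) = T * (S * S) * T := by noncomm_ring
      _ = T * C * T := by rw [hCpsd.sqrt_mul_self]
  have htreq : Matrix.trace ((S * T)ᴴ * (S * T)) = Matrix.trace (C * B) := by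
    rw [hM, Matrix.mul_assoc, trace_mul_comm, Matrix.mul_assoc, hB.sqrt_mul_self]
  have h2 : (Matrix.trace (C * B)).re = 0 ↔ C * B = 0 := by
    constructor
    · intro h
      have hST : S * T = 0 := (aux_trace_re _).mp (by rw [htreq]; exact h)
      have : C * B = S * (S * T) * T := by
        rw [← hCpsd.sqrt_mul_self, ← hB.sqrt_mul_self]; noncomm_ring
      rw [this, hST]; simp
    · intro h; rw [h, trace_zero]; simp
  -- step 3 : C * B = 0 ↔ RHS
  have hAv : ∀ v : Fin n → ℂ, (A.mulVec v = ((μ : ℝ) : ℂ) • v ↔ C.mulVec v = 0) := by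
    intro v
    rw [hCdef, Matrix.sub_mulVec, Matrix.smul_mulVec, Matrix.one_mulVec, sub_eq_zero,
      eq_comm]
  have hherm : ∀ (M : Matrix (Fin n) (Fin n) ℂ), Mᴴ = M →
      ∀ (w v : Fin n → ℂ), star w ⬝ᵥ (M.mulVec v) = star (M.mulVec w) ⬝ᵥ v := by
    intro M hMh w v
    rw [star_mulVec, hMh, Matrix.dotProduct_mulVec]
  have h3 : C * B = 0 ↔
      ∀ v : Fin n → ℂ, (∀ w : Fin n → ℂ, B.mulVec w = 0 → star w ⬝ᵥ v = 0) →
        A.mulVec v = ((μ : ℝ) : ℂ) • v := by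
    constructor
    · intro h v hv
      rw [hAv v]
      have hBC : B * C = 0 := by
        have := congrArg conjTranspose h
        rwa [conjTranspose_mul, hCpsd.1.eq, hB.1.eq, conjTranspose_zero] at this
      have key : ∀ w : Fin n → ℂ, star w ⬝ᵥ (C.mulVec v) = 0 := by
        intro w
        rw [hherm C hCpsd.1.eq w v]
        apply hv
        rw [Matrix.mulVec_mulVec, hBC, Matrix.zero_mulVec]
      apply dotProduct_eq_zero
      intro u
      have := key (star u)
      rwa [star_star, dotProduct_comm] at this
    · intro h
      have hz : ∀ u : Fin n → ℂ, (C * B).mulVec u = 0 := by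
        intro u
        rw [← Matrix.mulVec_mulVec]
        have hv : ∀ w : Fin n → ℂ, B.mulVec w = 0 → star w ⬝ᵥ (B.mulVec u) = 0 := by
          intro w hw
          rw [hherm B hB.1.eq w u, hw]
          simp
        have := (hAv (B.mulVec u)).mp (h (B.mulVec u) hv)
        exact this
      ext i j
      have h5 := congrFun (hz (Pi.single j 1)) i
      simpa [Matrix.mulVec_single] using h5
  rw [hμ] at h1 ⊢
  exact h1.trans (h2.trans h3)
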